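/- Let a, b, c, τ, ω be real numbers with bc ≠ 0 and ω > 0, and suppose 2bc·cos(ωτ) + b² + c² = ω² + a². Then there exists σ ∈ [0, 2π/ω) such that, setting r = τ + σ, the pair of equations a = −b·cos(ωr) − c·cos(ωσ) and ω = b·sin(ωr) + c·sin(ωσ) holds. -/

import Mathlib

lemma exists_angle (x y : ℝ) (hxy : x ^ 2 + y ^ 2 = 1) :
    ∃ θ ∈ Set.Ico (0 : ℝ) (2 * Real.pi), Real.cos θ = x ∧ Real.sin θ = y := by
  set z : ℂ := ⟨x, y⟩ with hz
  have habs : ‖z‖ = 1 := by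
    rw [Complex.norm_def, Complex.normSq_mk]
    rw [show x * x + y * y = 1 by nlinarith]
    exact Real.sqrt_one
  have hz0 : z ≠ 0 := by
    intro h0; rw [h0] at habs; simp at habs
  have hcos : Real.cos z.arg = x := by
    rw [Complex.cos_arg hz0, habs]; simp [hz]
  have hsin : Real.sin z.arg = y := by
    rw [Complex.sin_arg, habs]; simp [hz]
  have harg := Complex.arg_mem_Ioc z
  have hπ : 0 < Real.pi := Real.pi_pos
  rcases lt_or_ge z.arg 0 with hneg | hpos
  · refine ⟨z.arg + 2 * Real.pi, ⟨by linarith [harg.1], by linarith [harg.2]⟩, ?_, ?_⟩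
    · rw [Real.cos_add_two_pi]; exact hcos
    · rw [Real.sin_add_two_pi]; exact hsin
  · exact ⟨z.arg, ⟨hpos, by linarith [harg.2]⟩, hcos, hsin⟩

theorem stmt_1 (a b c τ ω : ℝ) (hbc : b * c ≠ 0) (hω : 0 < ω)
    (h : 2 * b * c * Real.cos (ω * τ) + b ^ 2 + c ^ 2 = ω ^ 2 + a ^ 2) :
    ∃ σ ∈ Set.Ico (0 : ℝ) (2 * Real.pi / ω),
      a = -b * Real.cos (ω * (τ + σ)) - c * Real.cos (ω * σ) ∧
      ω = b * Real.sin (ω * (τ + σ)) + c * Real.sin (ω * σ) := by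
  set C := Real.cos (ω * τ) with hC
  set S := Real.sin (ω * τ) with hS
  have hp : S ^ 2 + C ^ 2 = 1 := Real.sin_sq_add_cos_sq _
  have hd : (0 : ℝ) < ω ^ 2 + a ^ 2 := by positivity
  set x : ℝ := (ω * b * S - a * (b * C + c)) / (ω ^ 2 + a ^ 2) with hx
  set y : ℝ := (ω * (b * C + c) + a * b * S) / (ω ^ 2 + a ^ 2) with hy
  have hxy : x ^ 2 + y ^ 2 = 1 := by
    rw [hx, hy]
    rw [div_pow, div_pow, ← add_div, div_eq_one_iff_eq (by positivity)]
    linear_combination (ω ^ 2 + a ^ 2) * b ^ 2 * hp + (ω ^ 2 + a ^ 2) * h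
  obtain ⟨θ, ⟨hθ0, hθ2⟩, hcos, hsin⟩ := exists_angle x y hxy
  refine ⟨θ / ω, ⟨by positivity, ?_⟩, ?_, ?_⟩
  · rw [div_lt_div_iff_of_pos_right hω]; nlinarith
  · have : ω * (τ + θ / ω) = ω * τ + θ := by field_simp
    rw [this, Real.cos_add, mul_div_cancel₀ _ hω.ne', hcos, hsin, ← hC, ← hS, hx, hy]
    field_simp
    linear_combination (-a * b ^ 2) * hp + (-a) * h
  · have : ω * (τ + θ / ω) = ω * τ + θ := by field_simp
    rw [this, Real.sin_add, mul_div_cancel₀ _ hω.ne', hcos, hsin, ← hC, ← hS, hx, hy]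
    field_simp
    linear_combination (-ω * b ^ 2) * hp + (-ω) * h
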